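/- Under the same hypotheses (X_{n+1} ≠ 0), the (n-1)-th column of H⁻¹ is C_{n-1} = (-Y_1/Y_{n+2}, …, -Y_n/Y_{n+2})ᵗ and the (n-2)-th column is C_{n-2} = (-X_1/X_{n+1}, …, -X_n/X_{n+1})ᵗ, i.e., (H⁻¹)_{i,n-1} = -Y_i/Y_{n+2} and (H⁻¹)_{i,n-2} = -X_i/X_{n+1} for all 1 ≤ i ≤ n. -/

import Mathlib

open Matrix

/-- The `n × n` heptadiagonal matrix of (1.1), with 1-indexed diagonal sequences
`a, b, c, d, e, f, g : ℤ → ℝ` (entry `H i j` with `i, j : Fin n` corresponds to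
row `i+1`, column `j+1` in the paper's indexing). -/
def heptaMatrix (n : ℕ) (a b c d e f g : ℤ → ℝ) : Matrix (Fin n) (Fin n) ℝ :=
  fun i j =>
    if ((j : ℤ) + 1) = ((i : ℤ) + 1) - 3 then a ((i : ℤ) + 1)
    else if ((j : ℤ) + 1) = ((i : ℤ) + 1) - 2 then b ((i : ℤ) + 1)
    else if ((j : ℤ) + 1) = ((i : ℤ) + 1) - 1 then c ((i : ℤ) + 1)
    else if ((j : ℤ) + 1) = ((i : ℤ) + 1) then d ((i : ℤ) + 1)
    else if ((j : ℤ) + 1) = ((i : ℤ) + 1) + 1 then e ((i : ℤ) + 1)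
    else if ((j : ℤ) + 1) = ((i : ℤ) + 1) + 2 then f ((i : ℤ) + 1)
    else if ((j : ℤ) + 1) = ((i : ℤ) + 1) + 3 then g ((i : ℤ) + 1)
    else 0

/-- `W : ℤ → ℝ` satisfies the seven-term recurrence
`aᵢ W_{i-3} + bᵢ W_{i-2} + cᵢ W_{i-1} + dᵢ Wᵢ + eᵢ W_{i+1} + fᵢ W_{i+2} + gᵢ W_{i+3} = 0`
for `1 ≤ i ≤ n`, with out-of-range terms (index `≤ 0`) treated as zero. -/
def SevenTermRec (n : ℕ) (a b c d e f g : ℤ → ℝ) (W : ℤ → ℝ) : Prop :=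
  (∀ j : ℤ, j ≤ 0 → W j = 0) ∧
  (∀ i : ℤ, 1 ≤ i → i ≤ (n : ℤ) →
    a i * W (i - 3) + b i * W (i - 2) + c i * W (i - 1) + d i * W i +
      e i * W (i + 1) + f i * W (i + 2) + g i * W (i + 3) = 0)

/-- The `k`-th standard basis vector of `ℝⁿ` (1-indexed `k`). -/
def stdBasis (n : ℕ) (k : ℤ) : Fin n → ℝ := fun i => if ((i : ℤ) + 1) = k then 1 else 0

/-- The 3×3 determinant with rows formed from `A`, `B`, `C` at indices `p`, `q`, `r`. -/
def det3 (A B C : ℤ → ℝ) (p q r : ℤ) : ℝ :=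
  Matrix.det !![A p, A q, A r; B p, B q, B r; C p, C q, C r]

/-- The `k`-th column (1-indexed, `1 ≤ k ≤ n`) of a matrix, as a vector; `0` out of range. -/
def matCol (n : ℕ) (M : Matrix (Fin n) (Fin n) ℝ) (k : ℤ) : Fin n → ℝ :=
  fun i => if hk : 1 ≤ k ∧ k ≤ (n : ℤ) then M i ⟨(k - 1).toNat, by omega⟩ else 0

lemma det3_eq (A B C : ℤ → ℝ) (p q r : ℤ) :
    det3 A B C p q r =
      A p * B q * C r - A p * B r * C q - A q * B p * C r + A q * B r * C p
        + A r * B p * C q - A r * B q * C p := by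
  simp [det3, Matrix.det_fin_three]
  try ring

def vext (n : ℕ) (v : Fin n → ℝ) : ℤ → ℝ :=
  fun p => if h : 1 ≤ p ∧ p ≤ (n : ℤ) then v ⟨(p - 1).toNat, by omega⟩ else 0

lemma vext_out (n : ℕ) (v : Fin n → ℝ) (p : ℤ) (hp : ¬ (1 ≤ p ∧ p ≤ (n : ℤ))) :
    vext n v p = 0 := dif_neg hp

lemma vext_apply (n : ℕ) (v : Fin n → ℝ) (i : Fin n) :
    vext n v ((i : ℤ) + 1) = v i := by
  have hi := i.isLt
  rw [vext, dif_pos ⟨by omega, by omega⟩]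
  congr 1
  apply Fin.ext
  show ((i : ℤ) + 1 - 1).toNat = (i : ℕ)
  omega

lemma sum_indic (n : ℕ) (v : Fin n → ℝ) (p : ℤ) (c : ℝ) :
    (∑ j : Fin n, if ((j : ℤ) + 1) = p then c * v j else 0) = c * vext n v p := by
  by_cases h : 1 ≤ p ∧ p ≤ (n : ℤ)
  · obtain ⟨h1, h2⟩ := h
    have hlt : (p - 1).toNat < n := by omega
    rw [Finset.sum_eq_single (⟨(p - 1).toNat, hlt⟩ : Fin n)]
    · have hc : (((⟨(p - 1).toNat, hlt⟩ : Fin n) : ℤ)) + 1 = p := by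
        show (((p - 1).toNat : ℕ) : ℤ) + 1 = p
        omega
      rw [if_pos hc]
      simp only [vext]
      rw [dif_pos ⟨h1, h2⟩]
    · intro j _ hj
      rw [if_neg]
      intro hc
      apply hj
      apply Fin.ext
      show (j : ℕ) = (p - 1).toNat
      omega
    · intro hmem; exact absurd (Finset.mem_univ _) hmem
  · rw [vext_out n v p h, mul_zero]
    apply Finset.sum_eq_zero
    intro j _
    have hj := j.isLt
    rw [if_neg]
    intro hc
    exact h ⟨by omega, by omega⟩

lemma hepta_entry (n : ℕ) (a b c d e f g : ℤ → ℝ) (v : Fin n → ℝ) (i j : Fin n) :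
    heptaMatrix n a b c d e f g i j * v j =
      (if ((j : ℤ) + 1) = ((i : ℤ) + 1) - 3 then a ((i : ℤ) + 1) * v j else 0)
      + (if ((j : ℤ) + 1) = ((i : ℤ) + 1) - 2 then b ((i : ℤ) + 1) * v j else 0)
      + (if ((j : ℤ) + 1) = ((i : ℤ) + 1) - 1 then c ((i : ℤ) + 1) * v j else 0)
      + (if ((j : ℤ) + 1) = ((i : ℤ) + 1) then d ((i : ℤ) + 1) * v j else 0)
      + (if ((j : ℤ) + 1) = ((i : ℤ) + 1) + 1 then e ((i : ℤ) + 1) * v j else 0)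
      + (if ((j : ℤ) + 1) = ((i : ℤ) + 1) + 2 then f ((i : ℤ) + 1) * v j else 0)
      + (if ((j : ℤ) + 1) = ((i : ℤ) + 1) + 3 then g ((i : ℤ) + 1) * v j else 0) := by
  simp only [heptaMatrix]
  by_cases h1 : ((j : ℤ) + 1) = ((i : ℤ) + 1) - 3
  · simp only [if_pos h1, if_neg (show ¬((j : ℤ) + 1) = ((i : ℤ) + 1) - 2 by omega),
      if_neg (show ¬((j : ℤ) + 1) = ((i : ℤ) + 1) - 1 by omega),
      if_neg (show ¬((j : ℤ) + 1) = ((i : ℤ) + 1) by omega),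
      if_neg (show ¬((j : ℤ) + 1) = ((i : ℤ) + 1) + 1 by omega),
      if_neg (show ¬((j : ℤ) + 1) = ((i : ℤ) + 1) + 2 by omega),
      if_neg (show ¬((j : ℤ) + 1) = ((i : ℤ) + 1) + 3 by omega)]
    ring
  by_cases h2 : ((j : ℤ) + 1) = ((i : ℤ) + 1) - 2
  · simp only [if_pos h2, if_neg h1,
      if_neg (show ¬((j : ℤ) + 1) = ((i : ℤ) + 1) - 1 by omega),
      if_neg (show ¬((j : ℤ) + 1) = ((i : ℤ) + 1) by omega),
      if_neg (show ¬((j : ℤ) + 1) = ((i : ℤ) + 1) + 1 by omega),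
      if_neg (show ¬((j : ℤ) + 1) = ((i : ℤ) + 1) + 2 by omega),
      if_neg (show ¬((j : ℤ) + 1) = ((i : ℤ) + 1) + 3 by omega)]
    ring
  by_cases h3 : ((j : ℤ) + 1) = ((i : ℤ) + 1) - 1
  · simp only [if_pos h3, if_neg h1, if_neg h2,
      if_neg (show ¬((j : ℤ) + 1) = ((i : ℤ) + 1) by omega),
      if_neg (show ¬((j : ℤ) + 1) = ((i : ℤ) + 1) + 1 by omega),
      if_neg (show ¬((j : ℤ) + 1) = ((i : ℤ) + 1) + 2 by omega),
      if_neg (show ¬((j : ℤ) + 1) = ((i : ℤ) + 1) + 3 by omega)]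
    ring
  by_cases h4 : ((j : ℤ) + 1) = ((i : ℤ) + 1)
  · simp only [if_pos h4, if_neg h1, if_neg h2, if_neg h3,
      if_neg (show ¬((j : ℤ) + 1) = ((i : ℤ) + 1) + 1 by omega),
      if_neg (show ¬((j : ℤ) + 1) = ((i : ℤ) + 1) + 2 by omega),
      if_neg (show ¬((j : ℤ) + 1) = ((i : ℤ) + 1) + 3 by omega)]
    ring
  by_cases h5 : ((j : ℤ) + 1) = ((i : ℤ) + 1) + 1
  · simp only [if_pos h5, if_neg h1, if_neg h2, if_neg h3, if_neg h4,
      if_neg (show ¬((j : ℤ) + 1) = ((i : ℤ) + 1) + 2 by omega),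
      if_neg (show ¬((j : ℤ) + 1) = ((i : ℤ) + 1) + 3 by omega)]
    ring
  by_cases h6 : ((j : ℤ) + 1) = ((i : ℤ) + 1) + 2
  · simp only [if_pos h6, if_neg h1, if_neg h2, if_neg h3, if_neg h4, if_neg h5,
      if_neg (show ¬((j : ℤ) + 1) = ((i : ℤ) + 1) + 3 by omega)]
    ring
  by_cases h7 : ((j : ℤ) + 1) = ((i : ℤ) + 1) + 3
  · simp only [if_pos h7, if_neg h1, if_neg h2, if_neg h3, if_neg h4, if_neg h5, if_neg h6]
    ring
  · simp only [if_neg h1, if_neg h2, if_neg h3, if_neg h4, if_neg h5, if_neg h6, if_neg h7]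
    ring

lemma hepta_mulVec (n : ℕ) (a b c d e f g : ℤ → ℝ) (v : Fin n → ℝ) (i : Fin n) :
    (heptaMatrix n a b c d e f g).mulVec v i =
      a ((i : ℤ) + 1) * vext n v (((i : ℤ) + 1) - 3)
      + b ((i : ℤ) + 1) * vext n v (((i : ℤ) + 1) - 2)
      + c ((i : ℤ) + 1) * vext n v (((i : ℤ) + 1) - 1)
      + d ((i : ℤ) + 1) * vext n v ((i : ℤ) + 1)
      + e ((i : ℤ) + 1) * vext n v (((i : ℤ) + 1) + 1)
      + f ((i : ℤ) + 1) * vext n v (((i : ℤ) + 1) + 2)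
      + g ((i : ℤ) + 1) * vext n v (((i : ℤ) + 1) + 3) := by
  simp only [Matrix.mulVec, dotProduct]
  simp only [hepta_entry n a b c d e f g v i]
  rw [Finset.sum_add_distrib, Finset.sum_add_distrib, Finset.sum_add_distrib,
    Finset.sum_add_distrib, Finset.sum_add_distrib, Finset.sum_add_distrib]
  rw [sum_indic, sum_indic, sum_indic, sum_indic, sum_indic, sum_indic, sum_indic]

lemma rec_comb (n : ℕ) (a b c d e f g A B C : ℤ → ℝ)
    (hA : SevenTermRec n a b c d e f g A) (hB : SevenTermRec n a b c d e f g B)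
    (hC : SevenTermRec n a b c d e f g C) (x y z : ℝ) :
    SevenTermRec n a b c d e f g (fun j => x * A j + y * B j + z * C j) := by
  constructor
  · intro j hj
    simp only [hA.1 j hj, hB.1 j hj, hC.1 j hj]
    ring
  · intro i h1 h2
    have ra := hA.2 i h1 h2
    have rb := hB.2 i h1 h2
    have rc := hC.2 i h1 h2
    simp only []
    linear_combination x * ra + y * rb + z * rc

lemma rec_det3 (n : ℕ) (a b c d e f g A B C : ℤ → ℝ)
    (hA : SevenTermRec n a b c d e f g A) (hB : SevenTermRec n a b c d e f g B)
    (hC : SevenTermRec n a b c d e f g C) (q r : ℤ) :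
    SevenTermRec n a b c d e f g (fun j => det3 A B C j q r) := by
  have heq : (fun j => det3 A B C j q r)
      = (fun j => (B q * C r - B r * C q) * A j + (A r * C q - A q * C r) * B j
          + (A q * B r - A r * B q) * C j) := by
    funext j
    rw [det3_eq]
    ring
  rw [heq]
  exact rec_comb n a b c d e f g A B C hA hB hC _ _ _

lemma cramer3 (A B C : ℤ → ℝ) (p q r : ℤ) (x y z : ℝ)
    (hd : det3 A B C p q r ≠ 0)
    (h1 : x * A p + y * B p + z * C p = 0)
    (h2 : x * A q + y * B q + z * C q = 0)
    (h3 : x * A r + y * B r + z * C r = 0) :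
    x = 0 ∧ y = 0 ∧ z = 0 := by
  rw [det3_eq] at hd
  refine ⟨?_, ?_, ?_⟩
  · have hx : x * (A p * B q * C r - A p * B r * C q - A q * B p * C r + A q * B r * C p
        + A r * B p * C q - A r * B q * C p) = 0 := by
      linear_combination (B q * C r - B r * C q) * h1 + (B r * C p - B p * C r) * h2
        + (B p * C q - B q * C p) * h3
    exact (mul_eq_zero.mp hx).resolve_right hd
  · have hy : y * (A p * B q * C r - A p * B r * C q - A q * B p * C r + A q * B r * C p
        + A r * B p * C q - A r * B q * C p) = 0 := by
      linear_combination (A r * C q - A q * C r) * h1 + (A p * C r - A r * C p) * h2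
        + (A q * C p - A p * C q) * h3
    exact (mul_eq_zero.mp hy).resolve_right hd
  · have hz : z * (A p * B q * C r - A p * B r * C q - A q * B p * C r + A q * B r * C p
        + A r * B p * C q - A r * B q * C p) = 0 := by
      linear_combination (A q * B r - A r * B q) * h1 + (A r * B p - A p * B r) * h2
        + (A p * B q - A q * B p) * h3
    exact (mul_eq_zero.mp hz).resolve_right hd

lemma rec_unique (n : ℕ) (a b c d e f g : ℤ → ℝ)
    (hgall : ∀ i : ℤ, 1 ≤ i → i ≤ (n : ℤ) → g i ≠ 0)
    (U W : ℤ → ℝ) (hU : SevenTermRec n a b c d e f g U) (hW : SevenTermRec n a b c d e f g W)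
    (h1 : U 1 = W 1) (h2 : U 2 = W 2) (h3 : U 3 = W 3) :
    ∀ j : ℤ, j ≤ (n : ℤ) + 3 → U j = W j := by
  have key : ∀ m : ℕ, (m : ℤ) ≤ (n : ℤ) + 3 → U (m : ℤ) = W (m : ℤ) := by
    intro m
    induction m using Nat.strong_induction_on with
    | _ m IH =>
      intro hm
      by_cases hm4 : m < 4
      · interval_cases m
        · rw [hU.1 _ (by norm_num), hW.1 _ (by norm_num)]
        · exact_mod_cast h1
        · exact_mod_cast h2
        · exact_mod_cast h3
      · push_neg at hm4
        have step : ∀ q : ℤ, q < (m : ℤ) → U q = W q := by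
          intro q hq
          rcases le_or_gt q 0 with h | h
          · rw [hU.1 q h, hW.1 q h]
          · rw [show q = ((q.toNat : ℕ) : ℤ) by omega]
            exact IH q.toNat (by omega) (by omega)
        have ru := hU.2 ((m : ℤ) - 3) (by omega) (by omega)
        have rw' := hW.2 ((m : ℤ) - 3) (by omega) (by omega)
        have hcancel : g ((m : ℤ) - 3) * U ((m : ℤ) - 3 + 3)
            = g ((m : ℤ) - 3) * W ((m : ℤ) - 3 + 3) := by
          linear_combination ru - rw' - a ((m : ℤ) - 3) * step ((m : ℤ) - 3 - 3) (by omega)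
            - b ((m : ℤ) - 3) * step ((m : ℤ) - 3 - 2) (by omega)
            - c ((m : ℤ) - 3) * step ((m : ℤ) - 3 - 1) (by omega)
            - d ((m : ℤ) - 3) * step ((m : ℤ) - 3) (by omega)
            - e ((m : ℤ) - 3) * step ((m : ℤ) - 3 + 1) (by omega)
            - f ((m : ℤ) - 3) * step ((m : ℤ) - 3 + 2) (by omega)
        have hfin := mul_left_cancel₀ (hgall ((m : ℤ) - 3) (by omega) (by omega)) hcancel
        rw [show (m : ℤ) - 3 + 3 = (m : ℤ) by ring] at hfin
        exact hfin
  intro j hj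
  rcases le_or_gt j 0 with h | h
  · rw [hU.1 j h, hW.1 j h]
  · rw [show j = ((j.toNat : ℕ) : ℤ) by omega]
    exact key j.toNat (by omega)

lemma hepta_mulVec_rec (n : ℕ) (hn : 4 < n) (a b c d e f g : ℤ → ℝ)
    (hg1 : g ((n : ℤ) - 2) = 1) (hg2 : g ((n : ℤ) - 1) = 1) (hg3 : g (n : ℤ) = 1)
    (hf1 : f ((n : ℤ) - 1) = 0) (hf2 : f (n : ℤ) = 0) (he1 : e (n : ℤ) = 0)
    (W : ℤ → ℝ) (hW : SevenTermRec n a b c d e f g W) (i : Fin n) :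
    (heptaMatrix n a b c d e f g).mulVec (fun j => W ((j : ℤ) + 1)) i =
      if ((i : ℤ) + 1) = (n : ℤ) - 2 then -W ((n : ℤ) + 1)
      else if ((i : ℤ) + 1) = (n : ℤ) - 1 then -W ((n : ℤ) + 2)
      else if ((i : ℤ) + 1) = (n : ℤ) then -W ((n : ℤ) + 3) else 0 := by
  have hvW : ∀ p : ℤ, p ≤ (n : ℤ) → vext n (fun j => W ((j : ℤ) + 1)) p = W p := by
    intro p hp
    by_cases h : 1 ≤ p
    · rw [vext, dif_pos ⟨h, hp⟩]
      show W ((((p - 1).toNat : ℕ) : ℤ) + 1) = W p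
      congr 1
      omega
    · rw [vext_out _ _ _ (by omega), hW.1 p (by omega)]
  have hv0 : ∀ p : ℤ, (n : ℤ) < p → vext n (fun j => W ((j : ℤ) + 1)) p = 0 :=
    fun p hp => vext_out _ _ _ (by omega)
  rw [hepta_mulVec]
  have hi := i.isLt
  have hrec := hW.2 ((i : ℤ) + 1) (by omega) (by omega)
  by_cases h2 : ((i : ℤ) + 1) = (n : ℤ) - 2
  · rw [if_pos h2]
    rw [hvW _ (by omega), hvW _ (by omega), hvW _ (by omega), hvW _ (by omega),
      hvW _ (by omega), hvW _ (by omega), hv0 _ (by omega)]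
    have hgI : g ((i : ℤ) + 1) = 1 := by rw [h2]; exact hg1
    rw [show ((i : ℤ) + 1) + 3 = (n : ℤ) + 1 by omega] at hrec
    linear_combination hrec - W ((n : ℤ) + 1) * hgI
  rw [if_neg h2]
  by_cases h1 : ((i : ℤ) + 1) = (n : ℤ) - 1
  · rw [if_pos h1]
    rw [hvW _ (by omega), hvW _ (by omega), hvW _ (by omega), hvW _ (by omega),
      hvW _ (by omega), hv0 _ (by omega), hv0 _ (by omega)]
    have hgI : g ((i : ℤ) + 1) = 1 := by rw [h1]; exact hg2
    have hfI : f ((i : ℤ) + 1) = 0 := by rw [h1]; exact hf1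
    rw [show ((i : ℤ) + 1) + 2 = (n : ℤ) + 1 by omega,
      show ((i : ℤ) + 1) + 3 = (n : ℤ) + 2 by omega] at hrec
    linear_combination hrec - W ((n : ℤ) + 2) * hgI - W ((n : ℤ) + 1) * hfI
  rw [if_neg h1]
  by_cases h0 : ((i : ℤ) + 1) = (n : ℤ)
  · rw [if_pos h0]
    rw [hvW _ (by omega), hvW _ (by omega), hvW _ (by omega), hvW _ (by omega),
      hv0 _ (by omega), hv0 _ (by omega), hv0 _ (by omega)]
    have hgI : g ((i : ℤ) + 1) = 1 := by rw [h0]; exact hg3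
    have hfI : f ((i : ℤ) + 1) = 0 := by rw [h0]; exact hf2
    have heI : e ((i : ℤ) + 1) = 0 := by rw [h0]; exact he1
    rw [show ((i : ℤ) + 1) + 1 = (n : ℤ) + 1 by omega,
      show ((i : ℤ) + 1) + 2 = (n : ℤ) + 2 by omega,
      show ((i : ℤ) + 1) + 3 = (n : ℤ) + 3 by omega] at hrec
    linear_combination hrec - W ((n : ℤ) + 3) * hgI - W ((n : ℤ) + 2) * hfI
      - W ((n : ℤ) + 1) * heI
  rw [if_neg h0]
  rw [hvW _ (by omega), hvW _ (by omega), hvW _ (by omega), hvW _ (by omega),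
    hvW _ (by omega), hvW _ (by omega), hvW _ (by omega)]
  exact hrec

lemma det3_swap12 (A B C : ℤ → ℝ) (p q r : ℤ) :
    det3 A B C p q r = -det3 A B C q p r := by
  rw [det3_eq, det3_eq]; ring

lemma det3_eq12 (A B C : ℤ → ℝ) (p r : ℤ) : det3 A B C p p r = 0 := by
  rw [det3_eq]; ring

lemma det3_eq13 (A B C : ℤ → ℝ) (p q : ℤ) : det3 A B C p q p = 0 := by
  rw [det3_eq]; ring

theorem stmt_8 (n : ℕ) (hn : 4 < n) (a b c d e f g A B C : ℤ → ℝ)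
    (hg : ∀ i : ℤ, 1 ≤ i → i ≤ (n : ℤ) - 3 → g i ≠ 0)
    (hg1 : g ((n : ℤ) - 2) = 1) (hg2 : g ((n : ℤ) - 1) = 1) (hg3 : g (n : ℤ) = 1)
    (hf1 : f ((n : ℤ) - 1) = 0) (hf2 : f (n : ℤ) = 0) (he1 : e (n : ℤ) = 0)
    (hA : SevenTermRec n a b c d e f g A) (hA1 : A 1 = 0) (hA2 : A 2 = 0) (hA3 : A 3 = 1)
    (hB : SevenTermRec n a b c d e f g B) (hB1 : B 1 = 0) (hB2 : B 2 = 1) (hB3 : B 3 = 0)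
    (hC : SevenTermRec n a b c d e f g C) (hC1 : C 1 = 1) (hC2 : C 2 = 0) (hC3 : C 3 = 0)
    (hX : det3 A B C ((n : ℤ) + 1) ((n : ℤ) + 2) ((n : ℤ) + 3) ≠ 0) :
    (∀ i : Fin n,
      (heptaMatrix n a b c d e f g)⁻¹ i ⟨n - 2, by omega⟩ =
        -(det3 A B C ((i : ℤ) + 1) ((n : ℤ) + 1) ((n : ℤ) + 3)) /
          det3 A B C ((n : ℤ) + 2) ((n : ℤ) + 1) ((n : ℤ) + 3)) ∧
    (∀ i : Fin n,
      (heptaMatrix n a b c d e f g)⁻¹ i ⟨n - 3, by omega⟩ =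
        -(det3 A B C ((i : ℤ) + 1) ((n : ℤ) + 2) ((n : ℤ) + 3)) /
          det3 A B C ((n : ℤ) + 1) ((n : ℤ) + 2) ((n : ℤ) + 3)) := by
  have hgall : ∀ i : ℤ, 1 ≤ i → i ≤ (n : ℤ) → g i ≠ 0 := by
    intro i h1 h2
    rcases lt_or_ge i ((n : ℤ) - 2) with h | h
    · exact hg i h1 (by omega)
    · have : i = (n : ℤ) - 2 ∨ i = (n : ℤ) - 1 ∨ i = (n : ℤ) := by omega
      rcases this with h | h | h <;> rw [h] <;> simp [hg1, hg2, hg3]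
  -- injectivity of mulVec
  have hker : ∀ v : Fin n → ℝ, (heptaMatrix n a b c d e f g).mulVec v = 0 → v = 0 := by
    intro v hv
    have hWrec : SevenTermRec n a b c d e f g (vext n v) := by
      constructor
      · intro j hj; exact vext_out _ _ _ (by omega)
      · intro i hi1 hi2
        have hilt : (i - 1).toNat < n := by omega
        have this1 := hepta_mulVec n a b c d e f g v ⟨(i - 1).toNat, hilt⟩
        have this2 : (heptaMatrix n a b c d e f g).mulVec v ⟨(i - 1).toNat, hilt⟩ = 0 := by
          rw [hv]; rfl
        rw [this2] at this1
        have hcast : (((⟨(i - 1).toNat, hilt⟩ : Fin n) : ℤ)) + 1 = i := by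
          show (((i - 1).toNat : ℕ) : ℤ) + 1 = i
          omega
        rw [hcast] at this1
        exact this1.symm
    set x := vext n v 3 with hx
    set y := vext n v 2 with hy
    set z := vext n v 1 with hz
    have hUrec := rec_comb n a b c d e f g A B C hA hB hC x y z
    have huniq := rec_unique n a b c d e f g hgall _ _ hUrec hWrec
      (by simp [hA1, hB1, hC1, hz]) (by simp [hA2, hB2, hC2, hy]) (by simp [hA3, hB3, hC3, hx])
    have e1 : x * A ((n : ℤ) + 1) + y * B ((n : ℤ) + 1) + z * C ((n : ℤ) + 1) = 0 := by
      have h := huniq ((n : ℤ) + 1) (by omega)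
      rw [vext_out n v _ (by omega)] at h
      exact h
    have e2 : x * A ((n : ℤ) + 2) + y * B ((n : ℤ) + 2) + z * C ((n : ℤ) + 2) = 0 := by
      have h := huniq ((n : ℤ) + 2) (by omega)
      rw [vext_out n v _ (by omega)] at h
      exact h
    have e3 : x * A ((n : ℤ) + 3) + y * B ((n : ℤ) + 3) + z * C ((n : ℤ) + 3) = 0 := by
      have h := huniq ((n : ℤ) + 3) (by omega)
      rw [vext_out n v _ (by omega)] at h
      exact h
    obtain ⟨hx0, hy0, hz0⟩ := cramer3 A B C _ _ _ x y z hX e1 e2 e3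
    have hzero : SevenTermRec n a b c d e f g (fun _ => 0) := by
      constructor
      · intro _ _; rfl
      · intro i _ _; ring
    have huniq0 := rec_unique n a b c d e f g hgall _ _ hzero hWrec
      hz0.symm hy0.symm hx0.symm
    funext i
    have h := huniq0 ((i : ℤ) + 1) (by have := i.isLt; omega)
    rw [vext_apply n v i] at h
    exact h.symm.trans rfl
  have hinj : Function.Injective (heptaMatrix n a b c d e f g).mulVec := by
    intro v w hvw
    have h0 : (heptaMatrix n a b c d e f g).mulVec (v - w) = 0 := by
      rw [Matrix.mulVec_sub, hvw, sub_self]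
    exact sub_eq_zero.mp (hker _ h0)
  have hUnit : IsUnit (heptaMatrix n a b c d e f g) :=
    Matrix.mulVec_injective_iff_isUnit.mp hinj
  have hdet : IsUnit (heptaMatrix n a b c d e f g).det :=
    (Matrix.isUnit_iff_isUnit_det _).mp hUnit
  have hinvmul : (heptaMatrix n a b c d e f g)⁻¹ * heptaMatrix n a b c d e f g = 1 :=
    Matrix.nonsing_inv_mul _ hdet
  -- generic column extraction
  have key : ∀ (W : ℤ → ℝ), SevenTermRec n a b c d e f g W → ∀ (k : Fin n) (s : ℝ), s ≠ 0 →
      (∀ i : Fin n,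
        (if ((i : ℤ) + 1) = (n : ℤ) - 2 then -W ((n : ℤ) + 1)
          else if ((i : ℤ) + 1) = (n : ℤ) - 1 then -W ((n : ℤ) + 2)
          else if ((i : ℤ) + 1) = (n : ℤ) then -W ((n : ℤ) + 3) else 0)
          = (if i = k then -s else 0)) →
      ∀ i : Fin n, (heptaMatrix n a b c d e f g)⁻¹ i k = -(W ((i : ℤ) + 1)) / s := by
    intro W hW k s hs hcol i
    have hmv : (heptaMatrix n a b c d e f g).mulVec (fun j => W ((j : ℤ) + 1))
        = Pi.single k (-s) := by
      funext j
      rw [hepta_mulVec_rec n hn a b c d e f g hg1 hg2 hg3 hf1 hf2 he1 W hW j, hcol j,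
        Pi.single_apply]
    have h3 : (heptaMatrix n a b c d e f g)⁻¹.mulVec (Pi.single k (-s))
        = fun j : Fin n => W ((j : ℤ) + 1) := by
      rw [← hmv, Matrix.mulVec_mulVec, hinvmul, Matrix.one_mulVec]
    have h4 := congrFun h3 i
    simp only [Matrix.mulVec_single, Pi.smul_apply, op_smul_eq_mul, Matrix.col_apply] at h4
    rw [eq_div_iff hs]
    linear_combination -h4
  constructor
  · -- column n-1 (Lean index n-2), via Y
    have hWY := rec_det3 n a b c d e f g A B C hA hB hC ((n : ℤ) + 1) ((n : ℤ) + 3)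
    set k : Fin n := ⟨n - 2, by omega⟩ with hk
    have hkv : (k : ℕ) = n - 2 := rfl
    have hs : det3 A B C ((n : ℤ) + 2) ((n : ℤ) + 1) ((n : ℤ) + 3) ≠ 0 := by
      rw [det3_swap12]
      exact neg_ne_zero.mpr hX
    intro i
    refine key _ hWY k _ hs ?_ i
    intro i'
    have hi' := i'.isLt
    by_cases h1 : ((i' : ℤ) + 1) = (n : ℤ) - 1
    · rw [if_neg (show ¬((i' : ℤ) + 1) = (n : ℤ) - 2 by omega), if_pos h1,
        if_pos (show i' = k from Fin.ext (by omega))]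
    · rw [if_neg (show ¬i' = k from fun hc => by
        rw [Fin.ext_iff, hkv] at hc; omega)]
      by_cases h2 : ((i' : ℤ) + 1) = (n : ℤ) - 2
      · rw [if_pos h2]
        show -det3 A B C ((n : ℤ) + 1) ((n : ℤ) + 1) ((n : ℤ) + 3) = 0
        rw [det3_eq12]
        ring
      · rw [if_neg h2, if_neg h1]
        by_cases h0 : ((i' : ℤ) + 1) = (n : ℤ)
        · rw [if_pos h0]
          show -det3 A B C ((n : ℤ) + 3) ((n : ℤ) + 1) ((n : ℤ) + 3) = 0
          rw [det3_eq13]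
          ring
        · rw [if_neg h0]
  · -- column n-2 (Lean index n-3), via X
    have hWX := rec_det3 n a b c d e f g A B C hA hB hC ((n : ℤ) + 2) ((n : ℤ) + 3)
    set k : Fin n := ⟨n - 3, by omega⟩ with hk
    have hkv : (k : ℕ) = n - 3 := rfl
    intro i
    refine key _ hWX k _ hX ?_ i
    intro i'
    have hi' := i'.isLt
    by_cases h2 : ((i' : ℤ) + 1) = (n : ℤ) - 2
    · rw [if_pos h2, if_pos (show i' = k from Fin.ext (by omega))]
    · rw [if_neg h2, if_neg (show ¬i' = k from fun hc => by
        rw [Fin.ext_iff, hkv] at hc; omega)]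
      by_cases h1 : ((i' : ℤ) + 1) = (n : ℤ) - 1
      · rw [if_pos h1]
        show -det3 A B C ((n : ℤ) + 2) ((n : ℤ) + 2) ((n : ℤ) + 3) = 0
        rw [det3_eq12]
        ring
      · rw [if_neg h1]
        by_cases h0 : ((i' : ℤ) + 1) = (n : ℤ)
        · rw [if_pos h0]
          show -det3 A B C ((n : ℤ) + 3) ((n : ℤ) + 2) ((n : ℤ) + 3) = 0
          rw [det3_eq13]
          ring
        · rw [if_neg h0]
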